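/- Let R be a commutative ring, let V ≤ U be R-modules, and let Λ be a nonempty subset of R such that U/V is Λ-torsion, i.e., for every element of U/V its annihilator in R contains a finite product of elements of Λ. Let J be an ideal of R such that J + λR = R for all λ ∈ Λ. Then for each n ≥ 1: UJⁿ + V = U and UJⁿ ∩ V = VJⁿ. -/

import Mathlib

universe u v

/-- Every finitely generated subgroup of `G` can be generated by at most `r` elements;
i.e. `rk(G) ≤ r`. -/
def rankLE (G : Type*) [Group G] (r : ℕ) : Prop :=
  ∀ H : Subgroup G, H.FG →
    ∃ S : Finset G, (S : Set G) ⊆ (H : Set G) ∧ S.card ≤ r ∧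
      Subgroup.closure (S : Set G) = H

/-- `G` has finite (Prüfer) rank. -/
def HasFiniteRank (G : Type*) [Group G] : Prop :=
  ∃ r : ℕ, rankLE G r

/-- The subgroup generated by all `n`-th powers. -/
def powSubgroup (G : Type*) [Group G] (n : ℕ) : Subgroup G :=
  Subgroup.closure {g : G | ∃ x : G, x ^ n = g}

/-- `G` has polynomial index growth with exponent `α`: every finite quotient `Q = G/K`
satisfies `|Q/Qⁿ| ≤ n^α` for all `n ≥ 1`. -/
def PIGAt (G : Type*) [Group G] (α : ℝ) : Prop :=
  ∀ (K : Subgroup G) [K.Normal], K.FiniteIndex →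
    ∀ n : ℕ, 1 ≤ n →
      (Nat.card ((G ⧸ K) ⧸ powSubgroup (G ⧸ K) n) : ℝ) ≤ (n : ℝ) ^ α

/-- `G` has polynomial index growth. -/
def PIG (G : Type*) [Group G] : Prop :=
  ∃ α : ℝ, 0 ≤ α ∧ PIGAt G α

/-- `PIG(α)` for a (finite) group itself: `|G/Gⁿ| ≤ n^α` for all `n ≥ 1`. -/
def FinPIG (G : Type*) [Group G] (α : ℕ) : Prop :=
  ∀ n : ℕ, 1 ≤ n → Nat.card (G ⧸ powSubgroup G n) ≤ n ^ α

def ResiduallyFinite (G : Type*) [Group G] : Prop :=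
  ∀ g : G, g ≠ 1 → ∃ K : Subgroup G, K.Normal ∧ K.FiniteIndex ∧ g ∉ K

/-- `G` is a product of finitely many cyclic subgroups `⟨g 0⟩⟨g 1⟩⋯⟨g (k-1)⟩`. -/
def BoundedlyGenerated (G : Type*) [Group G] : Prop :=
  ∃ (k : ℕ) (g : Fin k → G), ∀ x : G, ∃ e : Fin k → ℤ,
    x = (List.ofFn fun i => g i ^ e i).prod

/-- `G/N` is polycyclic: there is a finite chain from `N` to `G`, each step normal
with cyclic factor. -/
def IsPolycyclicQuotientOf {G : Type*} [Group G] (N : Subgroup G) : Prop :=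
  ∃ (n : ℕ) (c : Fin (n + 1) → Subgroup G),
    c 0 = N ∧ c (Fin.last n) = ⊤ ∧
    ∀ i : Fin n,
      c i.castSucc ≤ c i.succ ∧
      ((c i.castSucc).subgroupOf (c i.succ)).Normal ∧
      ∃ x ∈ c i.succ, c i.succ ≤ c i.castSucc ⊔ Subgroup.zpowers x

def IsPolycyclic (G : Type*) [Group G] : Prop :=
  IsPolycyclicQuotientOf (⊥ : Subgroup G)

/-- ℚ/ℤ. -/
abbrev QmodZ : Type := ℚ ⧸ AddSubgroup.zmultiples (1 : ℚ)

/-- The Prüfer group `C_{p^∞}`: the `p`-primary torsion subgroup of ℚ/ℤ. -/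
def prufer (p : ℕ) : AddSubgroup QmodZ where
  carrier := {x | ∃ n : ℕ, p ^ n • x = 0}
  zero_mem' := ⟨0, smul_zero _⟩
  add_mem' := by
    intro a b ha hb
    obtain ⟨n, hn⟩ := ha
    obtain ⟨m, hm⟩ := hb
    refine ⟨n + m, ?_⟩
    have ha' : p ^ (n + m) • a = 0 := by
      rw [pow_add, mul_comm, mul_smul, hn, smul_zero]
    have hb' : p ^ (n + m) • b = 0 := by
      rw [pow_add, mul_smul, hm, smul_zero]
    rw [smul_add, ha', hb', add_zero]
  neg_mem' := by
    intro a ha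
    obtain ⟨n, hn⟩ := ha
    exact ⟨n, by rw [smul_neg, hn, neg_zero]⟩

/-- `G` is a minimax group: there is a finite chain `1 = G₀ ⊴ G₁ ⊴ … ⊴ Gₙ = G` whose
factors are cyclic or quasicyclic (Prüfer). -/
def IsMinimax (G : Type*) [Group G] : Prop :=
  ∃ (n : ℕ) (c : Fin (n + 1) → Subgroup G),
    c 0 = ⊥ ∧ c (Fin.last n) = ⊤ ∧
    ∀ i : Fin n,
      c i.castSucc ≤ c i.succ ∧
      ((c i.castSucc).subgroupOf (c i.succ)).Normal ∧
      ((∃ x ∈ c i.succ, c i.succ ≤ c i.castSucc ⊔ Subgroup.zpowers x) ∨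
       (∃ p : ℕ, p.Prime ∧
          ∃ φ : ↥(c i.succ) →* Multiplicative ↥(prufer p),
            Function.Surjective φ ∧ φ.ker = (c i.castSucc).subgroupOf (c i.succ)))

/-- `spec G`: set of primes `p` such that `G` has a section isomorphic to `C_{p^∞}`. -/
def groupSpec (G : Type*) [Group G] : Set ℕ :=
  {p | p.Prime ∧ ∃ (H : Subgroup G) (φ : ↥H →* Multiplicative ↥(prufer p)),
    Function.Surjective φ}

/-- `G` is residually nilpotent. -/
def ResiduallyNilpotent (G : Type*) [Group G] : Prop :=
  ∀ g : G, g ≠ 1 → ∃ K : Subgroup G, K.Normal ∧ g ∉ K ∧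
    ∃ n : ℕ, Subgroup.lowerCentralSeries (⊤ : Subgroup G) n ≤ K

/-- The upper rank of `G` is at most `r`: every finite quotient of `G` has rank at most `r`. -/
def UpperRankLE (G : Type*) [Group G] (r : ℕ) : Prop :=
  ∀ (K : Subgroup G) [K.Normal], K.FiniteIndex → rankLE (G ⧸ K) r

/-- The upper `p`-rank of `G` is at most `r`: every `p`-subgroup of a finite quotient of `G`
has rank at most `r`. -/
def UpperPRankLE (G : Type*) [Group G] (p r : ℕ) : Prop :=
  ∀ (K : Subgroup G) [K.Normal], K.FiniteIndex →
    ∀ P : Subgroup (G ⧸ K), IsPGroup p ↥P → rankLE ↥P r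

/-- Hypothesis 𝓗: every quotient of `G` possessing a residually nilpotent normal subgroup of
finite index has finite upper rank. -/
def HypothesisH (G : Type*) [Group G] : Prop :=
  ∀ (N : Subgroup G) [N.Normal],
    (∃ H : Subgroup (G ⧸ N), H.Normal ∧ H.FiniteIndex ∧ ResiduallyNilpotent ↥H) →
    ∃ r : ℕ, UpperRankLE (G ⧸ N) r

/-- number of subgroups of index at most `n`. -/
noncomputable def subgroupCount (G : Type*) [Group G] (n : ℕ) : ℕ :=
  Nat.card {H : Subgroup G // 0 < H.index ∧ H.index ≤ n}

/-- An embedding of `G` into `GL_n(F)` for some field `F` of characteristic `0`. -/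
structure LinearEmbeddingC0 (G : Type u) [Group G] : Type (u + 1) where
  n : ℕ
  F : Type
  [fieldF : Field F]
  [charF : CharZero F]
  ρ : G →* Matrix.GeneralLinearGroup (Fin n) F
  inj : Function.Injective ρ

/-- An infinite quotient of `G` embedded in `GL_n(F)`, `F` of characteristic `0`. -/
structure InfiniteLinearQuotientC0 (G : Type u) [Group G] : Type (u + 1) where
  K : Subgroup G
  [norm : K.Normal]
  n : ℕ
  F : Type
  [fieldF : Field F]
  [charF : CharZero F]
  ρ : (G ⧸ K) →* Matrix.GeneralLinearGroup (Fin n) F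
  inj : Function.Injective ρ
  inf : Infinite (G ⧸ K)

private lemma jim_coprime {R : Type*} [CommRing R] (J : Ideal R) (Λ : Set R)
    (hJ : ∀ lam ∈ Λ, J ⊔ Ideal.span {lam} = ⊤) (l : List R) (hl : ∀ x ∈ l, x ∈ Λ)
    (n : ℕ) : J ^ n ⊔ Ideal.span {l.prod} = ⊤ := by
  have h1 : J ⊔ Ideal.span {l.prod} = ⊤ := by
    induction l with
    | nil => simp [Ideal.span_singleton_one]
    | cons a t ih =>
      have hc : IsCoprime J (Ideal.span {a} * Ideal.span {t.prod}) := by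
        refine IsCoprime.mul_right ?_ ?_
        · exact (Ideal.isCoprime_iff_sup_eq).mpr (hJ a (hl a (by simp)))
        · exact (Ideal.isCoprime_iff_sup_eq).mpr (ih (fun x hx => hl x (by simp [hx])))
      rw [Ideal.span_singleton_mul_span_singleton] at hc
      simpa using (Ideal.isCoprime_iff_sup_eq).mp hc
  have hc : IsCoprime J (Ideal.span {l.prod}) := (Ideal.isCoprime_iff_sup_eq).mpr h1
  exact (Ideal.isCoprime_iff_sup_eq).mp (hc.pow_left)

/-- Lemma (jim). If `U/V` is `Λ`-torsion and `J + λR = R` for all `λ ∈ Λ`,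
then `UJⁿ + V = U` and `UJⁿ ∩ V = VJⁿ`. -/
theorem stmt_16 (R : Type*) [CommRing R] (M : Type*) [AddCommGroup M] [Module R M]
    (U V : Submodule R M) (hVU : V ≤ U)
    (Λ : Set R) (hΛ : Λ.Nonempty)
    (htors : ∀ u ∈ U, ∃ l : List R, l ≠ [] ∧ (∀ x ∈ l, x ∈ Λ) ∧ l.prod • u ∈ V)
    (J : Ideal R) (hJ : ∀ lam ∈ Λ, J ⊔ Ideal.span {lam} = ⊤) :
    ∀ n : ℕ, 1 ≤ n →
      (J ^ n • U) ⊔ V = U ∧ (J ^ n • U) ⊓ V = J ^ n • V := by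
  intro n _
  -- extract a "1 = j + r * μ" decomposition from coprimality
  have key : ∀ l : List R, (∀ x ∈ l, x ∈ Λ) →
      ∃ j ∈ J ^ n, ∃ r : R, j + r * l.prod = 1 := by
    intro l hl
    have h := jim_coprime J Λ hJ l hl n
    have h1 : (1 : R) ∈ J ^ n ⊔ Ideal.span {l.prod} := h ▸ Submodule.mem_top
    obtain ⟨j, hj, s, hs, hjs⟩ := Submodule.mem_sup.mp h1
    obtain ⟨r, hr⟩ := Ideal.mem_span_singleton'.mp hs
    exact ⟨j, hj, r, by rw [← hr] at hjs; exact hjs⟩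
  constructor
  · -- J^n • U ⊔ V = U
    apply le_antisymm
    · exact sup_le (Submodule.smul_le.mpr fun r _ u hu => U.smul_mem r hu) hVU
    · intro u hu
      obtain ⟨l, hlne, hlΛ, hlv⟩ := htors u hu
      obtain ⟨j, hj, r, hjr⟩ := key l hlΛ
      have : u = j • u + r • (l.prod • u) := by
        rw [smul_smul, ← add_smul, hjr, one_smul]
      rw [this]
      exact Submodule.mem_sup.mpr ⟨j • u, Submodule.smul_mem_smul hj hu,
        r • (l.prod • u), V.smul_mem r hlv, rfl⟩
  · -- J^n • U ⊓ V = J^n • V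
    apply le_antisymm
    · intro v ⟨hv1, hv2⟩
      -- find μ (a product of elements of Λ) with μ • v ∈ J^n • V
      have hmu : ∃ l : List R, l ≠ [] ∧ (∀ x ∈ l, x ∈ Λ) ∧ l.prod • v ∈ J ^ n • V := by
        refine Submodule.smul_induction_on hv1 ?_ ?_
        · intro r hr u hu
          obtain ⟨l, hlne, hlΛ, hlv⟩ := htors u hu
          refine ⟨l, hlne, hlΛ, ?_⟩
          rw [smul_comm]
          exact Submodule.smul_mem_smul hr hlv
        · rintro x y ⟨l1, h1ne, h1Λ, h1v⟩ ⟨l2, h2ne, h2Λ, h2v⟩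
          refine ⟨l1 ++ l2, by simp [h1ne], ?_, ?_⟩
          · intro a ha
            rcases List.mem_append.mp ha with h | h
            exacts [h1Λ a h, h2Λ a h]
          · have e : (l1 ++ l2).prod • (x + y) =
                l2.prod • (l1.prod • x) + l1.prod • (l2.prod • y) := by
              rw [List.prod_append, smul_add, mul_smul, mul_smul, smul_comm l1.prod l2.prod x]
            rw [e]
            exact Submodule.add_mem _ (Submodule.smul_mem _ _ h1v)
              (Submodule.smul_mem _ _ h2v)
      obtain ⟨l, hlne, hlΛ, hlv⟩ := hmu
      obtain ⟨j, hj, r, hjr⟩ := key l hlΛ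
      have : v = j • v + r • (l.prod • v) := by
        rw [smul_smul, ← add_smul, hjr, one_smul]
      rw [this]
      exact Submodule.add_mem _ (Submodule.smul_mem_smul hj hv2)
        (Submodule.smul_mem _ _ hlv)
    · exact le_inf (Submodule.smul_mono le_rfl hVU)
        (Submodule.smul_le.mpr fun r _ v hv => V.smul_mem r hv)
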